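/- If constraints C̃_I on a phase space are each of the form C̃_I = P_I + h_I where P_I are momenta conjugate to configuration variables T_I that do not appear in any h_J, and the system {C̃_I} is first class, then all Poisson brackets {C̃_I, C̃_J} vanish identically (the constraints mutually commute). -/

import Mathlib

/-- The phase space with canonical pairs `(T_I, P_I)` (`I = 1,…,n`) and `(q_α, p_α)`
(`α = 1,…,m`). -/
abbrev PhaseSpace (n m : ℕ) :=
  (Fin n → ℝ) × (Fin n → ℝ) × (Fin m → ℝ) × (Fin m → ℝ)

/-- The canonical Poisson bracket
`{F,G} = Σ_I (∂F/∂T_I ∂G/∂P_I − ∂F/∂P_I ∂G/∂T_I) + Σ_α (∂F/∂q_α ∂G/∂p_α − ∂F/∂p_α ∂G/∂q_α)`. -/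
noncomputable def poissonBracket {n m : ℕ} (F G : PhaseSpace n m → ℝ)
    (z : PhaseSpace n m) : ℝ :=
  (∑ I : Fin n,
      (fderiv ℝ F z (Pi.single I 1, 0, 0, 0) * fderiv ℝ G z (0, Pi.single I 1, 0, 0)
        - fderiv ℝ F z (0, Pi.single I 1, 0, 0) * fderiv ℝ G z (Pi.single I 1, 0, 0, 0)))
    + ∑ α : Fin m,
      (fderiv ℝ F z (0, 0, Pi.single α 1, 0) * fderiv ℝ G z (0, 0, 0, Pi.single α 1)
        - fderiv ℝ F z (0, 0, 0, Pi.single α 1) * fderiv ℝ G z (0, 0, Pi.single α 1, 0))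

/-- The deparametrized constraint `C̃_I = P_I + h_I(q,p)`. -/
def deparamConstraint {n m : ℕ} (h : Fin n → (Fin m → ℝ) × (Fin m → ℝ) → ℝ)
    (I : Fin n) (z : PhaseSpace n m) : ℝ :=
  z.2.1 I + h I z.2.2


lemma fderiv_deparam {n m : ℕ} (h : Fin n → (Fin m → ℝ) × (Fin m → ℝ) → ℝ)
    (hdiff : ∀ I, Differentiable ℝ (h I)) (I : Fin n) (z v : PhaseSpace n m) :
    fderiv ℝ (deparamConstraint h I) z v = v.2.1 I + fderiv ℝ (h I) z.2.2 v.2.2 := by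
  set e1 : PhaseSpace n m →L[ℝ] ℝ :=
    (ContinuousLinearMap.proj I).comp
      ((ContinuousLinearMap.fst ℝ (Fin n → ℝ) ((Fin m → ℝ) × (Fin m → ℝ))).comp
        (ContinuousLinearMap.snd ℝ (Fin n → ℝ) ((Fin n → ℝ) × (Fin m → ℝ) × (Fin m → ℝ)))) with he1
  set e2 : PhaseSpace n m →L[ℝ] ((Fin m → ℝ) × (Fin m → ℝ)) :=
    (ContinuousLinearMap.snd ℝ (Fin n → ℝ) ((Fin m → ℝ) × (Fin m → ℝ))).comp
      (ContinuousLinearMap.snd ℝ (Fin n → ℝ) ((Fin n → ℝ) × (Fin m → ℝ) × (Fin m → ℝ))) with he2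
  have hC : HasFDerivAt (deparamConstraint h I)
      (e1 + (fderiv ℝ (h I) z.2.2).comp e2) z := by
    have h1 : HasFDerivAt (fun z : PhaseSpace n m => z.2.1 I) e1 z := e1.hasFDerivAt
    have h2 : HasFDerivAt (fun z : PhaseSpace n m => h I z.2.2)
        ((fderiv ℝ (h I) z.2.2).comp e2) z :=
      ((hdiff I z.2.2).hasFDerivAt).comp z e2.hasFDerivAt
    exact h1.add h2
  rw [hC.fderiv]
  rfl

lemma bracket_formula {n m : ℕ} (h : Fin n → (Fin m → ℝ) × (Fin m → ℝ) → ℝ)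
    (hdiff : ∀ I, Differentiable ℝ (h I)) (I J : Fin n) (z : PhaseSpace n m) :
    poissonBracket (deparamConstraint h I) (deparamConstraint h J) z
      = ∑ α : Fin m,
        (fderiv ℝ (h I) z.2.2 (Pi.single α 1, 0) * fderiv ℝ (h J) z.2.2 (0, Pi.single α 1)
          - fderiv ℝ (h I) z.2.2 (0, Pi.single α 1) * fderiv ℝ (h J) z.2.2 (Pi.single α 1, 0)) := by
  unfold poissonBracket
  simp only [fderiv_deparam h hdiff]
  simp [← Prod.zero_eq_mk]

/-- If the constraints `C̃_I = P_I + h_I` are linear in the momenta `P_I`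
conjugate to configuration variables `T_I` that do not appear in any `h_J` (each `h_J`
depends only on `(q,p)`), and the system `{C̃_I}` is first class, i.e.
`{C̃_I, C̃_J} = Σ_K f_{IJ}^K C̃_K`, then all Poisson brackets `{C̃_I, C̃_J}` vanish
identically: the constraints mutually commute. -/
theorem deparametrized_constraints_commute
    {n m : ℕ} (h : Fin n → (Fin m → ℝ) × (Fin m → ℝ) → ℝ)
    (hdiff : ∀ I, Differentiable ℝ (h I))
    (f : Fin n → Fin n → Fin n → PhaseSpace n m → ℝ)
    (hfc : ∀ (I J : Fin n) (z : PhaseSpace n m),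
      poissonBracket (deparamConstraint h I) (deparamConstraint h J) z
        = ∑ K : Fin n, f I J K z * deparamConstraint h K z) :
    ∀ (I J : Fin n) (z : PhaseSpace n m),
      poissonBracket (deparamConstraint h I) (deparamConstraint h J) z = 0 := by
  intro I J z
  set z' : PhaseSpace n m := (z.1, fun K => - h K z.2.2, z.2.2) with hz'
  have h22 : z'.2.2 = z.2.2 := rfl
  rw [bracket_formula h hdiff, ← h22, ← bracket_formula h hdiff, hfc]
  simp [deparamConstraint, hz']
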